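/- Suppose each value function v i is differentiable on [0, b i] with 0 ≤ v i'(s) ≤ pmax for all s ∈ [0, b i]. Then for every probability measure Q on Ω, the penalty satisfies α(Q) = sup over s with 0 ≤ s i ≤ b i for all i of ∑ i, ( v i (s i) - p* i * s i ), where p* i = ∫ p i dQ(p). -/

import Mathlib

open MeasureTheory

noncomputable section

/-- The set of possible price scenarios. -/
abbrev Omega (N : ℕ) (pmax : ℝ) : Type :=
  {p : Fin N → ℝ // ∀ i, 0 ≤ p i ∧ p i ≤ pmax}

/-- A position `S = (w, s)`: collected revenue `w ≥ 0` and remaining budgets `0 ≤ s i ≤ b i`. -/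
def IsPosition (N : ℕ) (b : Fin N → ℝ) (S : ℝ × (Fin N → ℝ)) : Prop :=
  0 ≤ S.1 ∧ ∀ i, 0 ≤ S.2 i ∧ S.2 i ≤ b i

/-- Return function of a position: `X_S(p) = w + ∑ i, p i * s i`. -/
def ret (N : ℕ) (pmax : ℝ) (S : ℝ × (Fin N → ℝ)) (p : Omega N pmax) : ℝ :=
  S.1 + ∑ i, p.1 i * S.2 i

/-- Generating function `θ(S) = -w - ∑ i, v i (s i)`. -/
def theta (N : ℕ) (v : Fin N → ℝ → ℝ) (S : ℝ × (Fin N → ℝ)) : ℝ :=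
  -S.1 - ∑ i, v i (S.2 i)

/-- Risk measure `ρ(X) = inf { θ(S) : S a position with X_S ≤ X pointwise }`, valued
in `ℝ ∪ {+∞}` (the infimum of the empty set is `+∞`). -/
def rho (N : ℕ) (b : Fin N → ℝ) (pmax : ℝ) (v : Fin N → ℝ → ℝ)
    (X : Omega N pmax → ℝ) : EReal :=
  sInf {t : EReal | ∃ S : ℝ × (Fin N → ℝ), IsPosition N b S ∧
    (∀ p, ret N pmax S p ≤ X p) ∧ t = ((theta N v S : ℝ) : EReal)}

/-- A bounded function on `Ω`. -/
def Bounded (N : ℕ) (pmax : ℝ) (X : Omega N pmax → ℝ) : Prop :=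
  ∃ C, ∀ p, |X p| ≤ C

/-- Penalty function `α(Q) = sup over bounded measurable X of (∫ (-X) dQ - ρ(X))`. -/
def alphaPen (N : ℕ) (b : Fin N → ℝ) (pmax : ℝ) (v : Fin N → ℝ → ℝ)
    (Q : Measure (Omega N pmax)) : EReal :=
  ⨆ X ∈ {X : Omega N pmax → ℝ | Measurable X ∧ Bounded N pmax X},
    (((∫ p, -X p ∂Q : ℝ) : EReal) - rho N b pmax v X)

/-- for differentiable value functions with `0 ≤ v i' ≤ pmax`, the penalty is
`α(Q) = sup over s in the budget box of ∑ i, (v i (s i) - p* i * s i)`, where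
`p* i = ∫ p i dQ(p)`. -/
theorem stmt8 (N : ℕ) (hN : 1 ≤ N) (b : Fin N → ℝ) (hb : ∀ i, 0 < b i)
    (pmax : ℝ) (hpmax : 0 < pmax)
    (v v' : Fin N → ℝ → ℝ)
    (hderiv : ∀ i, ∀ s ∈ Set.Icc (0:ℝ) (b i),
      HasDerivWithinAt (v i) (v' i s) (Set.Icc (0:ℝ) (b i)) s)
    (hbound : ∀ i, ∀ s ∈ Set.Icc (0:ℝ) (b i), 0 ≤ v' i s ∧ v' i s ≤ pmax)
    (Q : Measure (Omega N pmax)) (hQ : IsProbabilityMeasure Q) :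
    alphaPen N b pmax v Q =
      ⨆ s ∈ {s : Fin N → ℝ | ∀ i, 0 ≤ s i ∧ s i ≤ b i},
        (((∑ i, (v i (s i) - (∫ p : Omega N pmax, p.1 i ∂Q) * s i) : ℝ) : EReal)) := by
  classical
  set pstar : Fin N → ℝ := fun i => ∫ p : Omega N pmax, p.1 i ∂Q with hpstar_def
  set Box : Set (Fin N → ℝ) := {s : Fin N → ℝ | ∀ i, 0 ≤ s i ∧ s i ≤ b i} with hBox_def
  -- basic measurability / integrability of coordinates
  have hm : ∀ i, Measurable fun p : Omega N pmax => p.1 i :=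
    fun i => (measurable_pi_apply i).comp measurable_subtype_coe
  have hcoordbd : ∀ i, ∀ p : Omega N pmax, ‖p.1 i‖ ≤ pmax := by
    intro i p
    rw [Real.norm_eq_abs, abs_of_nonneg (p.2 i).1]
    exact (p.2 i).2
  have hint : ∀ i, Integrable (fun p : Omega N pmax => p.1 i) Q := by
    intro i
    exact ⟨(hm i).aestronglyMeasurable,
      HasFiniteIntegral.of_bounded (C := pmax) (Filter.Eventually.of_forall (hcoordbd i))⟩
  have hpm : ∀ i, |pstar i| ≤ pmax := by
    intro i
    have h := norm_integral_le_of_norm_le_const (μ := Q)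
      (f := fun p : Omega N pmax => p.1 i) (C := pmax)
      (Filter.Eventually.of_forall (hcoordbd i))
    simpa [Real.norm_eq_abs, hpstar_def] using h
  -- integral of return functions
  have hsumint : ∀ S : ℝ × (Fin N → ℝ),
      Integrable (fun p : Omega N pmax => ∑ i, p.1 i * S.2 i) Q :=
    fun S => integrable_finset_sum _ fun i _ => (hint i).mul_const _
  have hretint : ∀ S : ℝ × (Fin N → ℝ), Integrable (ret N pmax S) Q := by
    intro S
    have h : ret N pmax S = fun p : Omega N pmax => S.1 + ∑ i, p.1 i * S.2 i := rfl
    rw [h]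
    exact (integrable_const S.1).add (hsumint S)
  have hretval : ∀ S : ℝ × (Fin N → ℝ),
      ∫ p, ret N pmax S p ∂Q = S.1 + ∑ i, pstar i * S.2 i := by
    intro S
    simp only [ret]
    rw [integral_add (integrable_const _) (hsumint S),
      integral_finset_sum _ (fun i _ => (hint i).mul_const _), integral_const]
    simp [hpstar_def, integral_mul_const]
  -- bound for v on the boxes
  choose Mv hMv using fun i =>
    (isCompact_Icc (a := (0:ℝ)) (b := b i)).exists_bound_of_continuousOn
      (fun s hs => ((hderiv i s hs).differentiableWithinAt).continuousWithinAt)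
  have hfub : ∀ s ∈ Box, (∑ i, (v i (s i) - pstar i * s i)) ≤ ∑ i, (Mv i + pmax * b i) := by
    intro s hs
    refine Finset.sum_le_sum fun i _ => ?_
    have h1 : v i (s i) ≤ Mv i := by
      have := hMv i (s i) ⟨(hs i).1, (hs i).2⟩
      rw [Real.norm_eq_abs] at this
      exact le_trans (le_abs_self _) this
    have h2 := abs_le.1 (hpm i)
    have h3 : -(pstar i * s i) ≤ pmax * s i := by nlinarith [(hs i).1]
    have h4 : pmax * s i ≤ pmax * b i := mul_le_mul_of_nonneg_left (hs i).2 hpmax.le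
    linarith
  -- the right-hand side
  set R : EReal := ⨆ s ∈ Box, ((∑ i, (v i (s i) - pstar i * s i) : ℝ) : EReal) with hR
  have hR_le : ∀ s ∈ Box, ((∑ i, (v i (s i) - pstar i * s i) : ℝ) : EReal) ≤ R := by
    intro s hs
    rw [hR]
    exact le_iSup₂ (f := fun s (_ : s ∈ Box) =>
      ((∑ i, (v i (s i) - pstar i * s i) : ℝ) : EReal)) s hs
  have hR_top : R ≠ ⊤ := by
    refine ne_top_of_le_ne_top (EReal.coe_ne_top (∑ i, (Mv i + pmax * b i))) ?_
    rw [hR]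
    exact iSup₂_le fun s hs => EReal.coe_le_coe_iff.2 (hfub s hs)
  have hR_bot : R ≠ ⊥ := by
    have h0 : (0 : Fin N → ℝ) ∈ Box := fun i => by
      simp only [Pi.zero_apply]; exact ⟨le_refl 0, (hb i).le⟩
    intro h
    have := hR_le 0 h0
    rw [h, le_bot_iff] at this
    exact EReal.coe_ne_bot _ this
  set r : ℝ := R.toReal with hr
  have hrR : (r : EReal) = R := EReal.coe_toReal hR_top hR_bot
  show alphaPen N b pmax v Q = R
  refine le_antisymm ?_ ?_
  · -- alphaPen ≤ R
    rw [alphaPen]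
    refine iSup₂_le fun X hX => ?_
    obtain ⟨hXm, CX, hXb⟩ := hX
    have hXint : Integrable X Q :=
      ⟨hXm.aestronglyMeasurable, HasFiniteIntegral.of_bounded (C := CX)
        (Filter.Eventually.of_forall fun p => by
          rw [Real.norm_eq_abs]; exact hXb p)⟩
    set a : ℝ := ∫ p, -X p ∂Q with ha
    have ha' : a = -∫ p, X p ∂Q := by rw [ha, integral_neg]
    have hrho : ((a - r : ℝ) : EReal) ≤ rho N b pmax v X := by
      rw [rho]
      refine le_sInf fun t ht => ?_
      obtain ⟨S, hS, hle, rfl⟩ := ht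
      rw [EReal.coe_le_coe_iff]
      have h1 : ∫ p, ret N pmax S p ∂Q ≤ ∫ p, X p ∂Q :=
        integral_mono (hretint S) hXint hle
      have h5 : (∑ i, (v i (S.2 i) - pstar i * S.2 i)) ≤ r :=
        EReal.coe_le_coe_iff.1 (by rw [hrR]; exact hR_le S.2 hS.2)
      have h7 : (∑ i, (v i (S.2 i) - pstar i * S.2 i))
          = ∑ i, v i (S.2 i) - ∑ i, pstar i * S.2 i := Finset.sum_sub_distrib _ _
      have h6 := hretval S
      simp only [theta]
      linarith
    calc ((a : ℝ) : EReal) - rho N b pmax v X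
        ≤ ((a : ℝ) : EReal) - ((a - r : ℝ) : EReal) := EReal.sub_le_sub le_rfl hrho
      _ = (r : EReal) := by rw [← EReal.coe_sub, sub_sub_cancel]
      _ = R := hrR
  · -- R ≤ alphaPen
    rw [hR]
    refine iSup₂_le fun s hs => ?_
    set S : ℝ × (Fin N → ℝ) := (0, s) with hSdef
    have hS : IsPosition N b S := ⟨le_refl 0, hs⟩
    have hXm : Measurable (ret N pmax S) := by
      have h : ret N pmax S = fun p : Omega N pmax => S.1 + ∑ i, p.1 i * S.2 i := rfl
      rw [h]
      exact measurable_const.add (Finset.measurable_sum _ fun i _ => (hm i).mul_const _)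
    have hXb : Bounded N pmax (ret N pmax S) := by
      refine ⟨∑ i, pmax * b i, fun p => ?_⟩
      have h1 : ret N pmax S p = ∑ i, p.1 i * s i := by
        simp [ret, hSdef]
      rw [h1, abs_of_nonneg (Finset.sum_nonneg fun i _ => mul_nonneg (p.2 i).1 (hs i).1)]
      exact Finset.sum_le_sum fun i _ => mul_le_mul (p.2 i).2 (hs i).2 (hs i).1 hpmax.le
    rw [alphaPen]
    refine le_trans ?_ (le_iSup₂ (f := fun (X : Omega N pmax → ℝ)
        (_ : X ∈ {X : Omega N pmax → ℝ | Measurable X ∧ Bounded N pmax X}) =>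
        (((∫ p, -X p ∂Q : ℝ) : EReal) - rho N b pmax v X))
      (ret N pmax S) (Set.mem_setOf_eq ▸ ⟨hXm, hXb⟩))
    have hρ : rho N b pmax v (ret N pmax S) ≤ ((theta N v S : ℝ) : EReal) := by
      rw [rho]
      exact sInf_le ⟨S, hS, fun p => le_rfl, rfl⟩
    have hint1 : ∫ p, -(ret N pmax S p) ∂Q = -(S.1 + ∑ i, pstar i * S.2 i) := by
      rw [integral_neg, hretval S]
    calc ((∑ i, (v i (s i) - pstar i * s i) : ℝ) : EReal)
        = ((∫ p, -(ret N pmax S p) ∂Q : ℝ) : EReal) - ((theta N v S : ℝ) : EReal) := by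
          rw [← EReal.coe_sub]
          congr 1
          rw [hint1]
          simp only [theta, hSdef, Finset.sum_sub_distrib]
          ring
      _ ≤ ((∫ p, -(ret N pmax S p) ∂Q : ℝ) : EReal) - rho N b pmax v (ret N pmax S) :=
          EReal.sub_le_sub le_rfl hρ
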